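/- arXiv:2012.00283 — 4 statements merged into one kernel-verified Lean document; each statement's English description precedes it below -/
import Mathlib

section
/- Let $H, M, A$ be $k \times k$ matrices over a field, with $A = \sum_{i=0}^{m-1} H^i M H^i$ for some positive integer $m$. Suppose $R$ and $S$ are $k \times k$ matrices commuting with $H$ such that $R M S = H A H + M - A$. Then for any positive integer $n$, letting $B = \sum_{i=0}^{n-1} H^i M H^i$, we have $R B S + A = \sum_{i=0}^{m+n-1} H^i M H^i$. -/
theorem stmt_0 {k : ℕ} {F : Type*} [Field F]
    (H M A R S : Matrix (Fin k) (Fin k) F) (m n : ℕ) (hm : 0 < m) (hn : 0 < n)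
    (hA : A = ∑ i ∈ Finset.range m, H ^ i * M * H ^ i)
    (hR : R * H = H * R) (hS : S * H = H * S)
    (hRS : R * M * S = H * A * H + M - A) :
    R * (∑ i ∈ Finset.range n, H ^ i * M * H ^ i) * S + A =
      ∑ i ∈ Finset.range (m + n), H ^ i * M * H ^ i := by
  have hRp : ∀ i : ℕ, R * H ^ i = H ^ i * R := fun i =>
    (show Commute R H from hR).pow_right i
  have hSp : ∀ i : ℕ, S * H ^ i = H ^ i * S := fun i =>
    (show Commute S H from hS).pow_right i
  have h1 : H * A * H = ∑ i ∈ Finset.range m, H ^ (i + 1) * M * H ^ (i + 1) := by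
    rw [hA, Finset.mul_sum, Finset.sum_mul]
    refine Finset.sum_congr rfl fun i _ => ?_
    rw [show H * (H ^ i * M * H ^ i) * H = (H * H ^ i) * M * (H ^ i * H) by noncomm_ring,
      ← pow_succ', ← pow_succ]
  have key : R * M * S = H ^ m * M * H ^ m := by
    have h1' : H * A * H + M = ∑ i ∈ Finset.range (m + 1), H ^ i * M * H ^ i := by
      rw [Finset.sum_range_succ', h1]; simp
    rw [hRS, h1', Finset.sum_range_succ, hA]
    abel
  have h2 : R * (∑ i ∈ Finset.range n, H ^ i * M * H ^ i) * S
      = ∑ i ∈ Finset.range n, H ^ (m + i) * M * H ^ (m + i) := by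
    rw [Finset.mul_sum, Finset.sum_mul]
    refine Finset.sum_congr rfl fun i _ => ?_
    have e1 : R * (H ^ i * M * H ^ i) * S = H ^ i * (R * M * S) * H ^ i := by
      rw [show R * (H ^ i * M * H ^ i) * S = (R * H ^ i) * M * (H ^ i * S) by noncomm_ring,
        hRp i, ← hSp i]
      noncomm_ring
    rw [e1, key]
    simp only [pow_add]
    rw [show H ^ i * (H ^ m * M * H ^ m) * H ^ i
        = (H ^ i * H ^ m) * M * (H ^ m * H ^ i) by noncomm_ring,
      pow_mul_comm]
  rw [Finset.sum_range_add, h2, ← hA]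
  abel
end

section
/- Let $H, M, A, B$ be $k \times k$ matrices over a field with $A = \sum_{i=0}^{m-1} H^i M H^i$ and $B = \sum_{i=0}^{n-1} H^i M H^i$. Suppose $f, g$ are polynomials such that $f(H) M = (H A H + M - A)\, g(H)$ and $g(H)$ is invertible. Then $f(H)\, B\, g(H)^{-1} + A = \sum_{i=0}^{m+n-1} H^i M H^i$. -/
lemma aeval_comm_aux {k : ℕ} {F : Type*} [Field F] (H : Matrix (Fin k) (Fin k) F)
    (p : Polynomial F) : Polynomial.aeval H p * H = H * Polynomial.aeval H p := by
  have h1 : Polynomial.aeval H Polynomial.X = H := Polynomial.aeval_X (R := F) H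
  calc Polynomial.aeval H p * H = Polynomial.aeval H (p * Polynomial.X) := by
        rw [map_mul (Polynomial.aeval H), h1]
    _ = Polynomial.aeval H (Polynomial.X * p) := by rw [mul_comm p]
    _ = H * Polynomial.aeval H p := by rw [map_mul (Polynomial.aeval H), h1]

theorem stmt_10 {k : ℕ} {F : Type*} [Field F]
    (H M A B : Matrix (Fin k) (Fin k) F) (m n : ℕ) (hm : 0 < m) (hn : 0 < n)
    (hA : A = ∑ i ∈ Finset.range m, H ^ i * M * H ^ i)
    (hB : B = ∑ i ∈ Finset.range n, H ^ i * M * H ^ i)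
    (f g : Polynomial F)
    (hfg : Polynomial.aeval H f * M = (H * A * H + M - A) * Polynomial.aeval H g)
    (hg : IsUnit (Polynomial.aeval H g)) :
    Polynomial.aeval H f * B * (Polynomial.aeval H g)⁻¹ + A =
      ∑ i ∈ Finset.range (m + n), H ^ i * M * H ^ i := by
  set G := Polynomial.aeval H g with hGdef
  have hdet : IsUnit G.det := (Matrix.isUnit_iff_isUnit_det G).mp hg
  have hGG : G * G⁻¹ = 1 := Matrix.mul_nonsing_inv G hdet
  have hGG' : G⁻¹ * G = 1 := Matrix.nonsing_inv_mul G hdet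
  have hcomm : G * H = H * G := aeval_comm_aux H g
  have hcommInv : G⁻¹ * H = H * G⁻¹ := by
    calc G⁻¹ * H = G⁻¹ * H * (G * G⁻¹) := by rw [hGG, mul_one]
      _ = G⁻¹ * (H * G) * G⁻¹ := by noncomm_ring
      _ = G⁻¹ * (G * H) * G⁻¹ := by rw [hcomm]
      _ = H * G⁻¹ := by rw [← mul_assoc, hGG', one_mul]
  have hcommInvPow : ∀ i : ℕ, G⁻¹ * H ^ i = H ^ i * G⁻¹ := by
    intro i
    induction i with
    | zero => simp
    | succ i ih =>
      rw [pow_succ, ← mul_assoc, ih, mul_assoc, hcommInv, ← mul_assoc]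
  have hcommF : ∀ i : ℕ, Polynomial.aeval H f * H ^ i = H ^ i * Polynomial.aeval H f := by
    intro i
    induction i with
    | zero => simp
    | succ i ih =>
      rw [pow_succ, ← mul_assoc, ih, mul_assoc, aeval_comm_aux, ← mul_assoc]
  have key : H * A * H + M - A = H ^ m * M * H ^ m := by
    have h1 : H * A * H = ∑ i ∈ Finset.range m, H ^ (i + 1) * M * H ^ (i + 1) := by
      rw [hA, Finset.mul_sum, Finset.sum_mul]
      refine Finset.sum_congr rfl fun i _ => ?_
      rw [pow_succ]
      have : H * H ^ i = H ^ i * H := (pow_succ' H i).symm.trans (pow_succ H i)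
      calc H * (H ^ i * M * H ^ i) * H = (H * H ^ i) * M * (H ^ i * H) := by noncomm_ring
        _ = H ^ i * H * M * (H ^ i * H) := by rw [this]
    have h2 : (∑ i ∈ Finset.range (m + 1), H ^ i * M * H ^ i)
        = (∑ i ∈ Finset.range m, H ^ (i + 1) * M * H ^ (i + 1)) + H ^ 0 * M * H ^ 0 :=
      Finset.sum_range_succ' _ m
    have h3 : (∑ i ∈ Finset.range (m + 1), H ^ i * M * H ^ i)
        = (∑ i ∈ Finset.range m, H ^ i * M * H ^ i) + H ^ m * M * H ^ m :=
      Finset.sum_range_succ _ m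
    rw [h1, hA]
    have hth := h2.symm.trans h3
    simp only [pow_zero, one_mul, mul_one] at hth
    rw [sub_eq_iff_eq_add, hth, add_comm]
  have hterm : ∀ i : ℕ, Polynomial.aeval H f * (H ^ i * M * H ^ i) * G⁻¹
      = H ^ (m + i) * M * H ^ (m + i) := by
    intro i
    calc Polynomial.aeval H f * (H ^ i * M * H ^ i) * G⁻¹
        = (Polynomial.aeval H f * H ^ i) * M * (H ^ i * G⁻¹) := by noncomm_ring
      _ = (H ^ i * Polynomial.aeval H f) * M * (G⁻¹ * H ^ i) := by
          rw [hcommF i, hcommInvPow i]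
      _ = H ^ i * (Polynomial.aeval H f * M) * (G⁻¹ * H ^ i) := by noncomm_ring
      _ = H ^ i * (H ^ m * M * H ^ m * G) * (G⁻¹ * H ^ i) := by rw [hfg, key]
      _ = H ^ i * (H ^ m * M * H ^ m) * (G * G⁻¹) * H ^ i := by noncomm_ring
      _ = H ^ i * H ^ m * M * (H ^ m * H ^ i) := by rw [hGG]; noncomm_ring
      _ = H ^ (m + i) * M * H ^ (m + i) := by
          rw [← pow_add, ← pow_add, Nat.add_comm i m]
  have hfB : Polynomial.aeval H f * B * G⁻¹
      = ∑ i ∈ Finset.range n, H ^ (m + i) * M * H ^ (m + i) := by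
    rw [hB, Finset.mul_sum, Finset.sum_mul]
    exact Finset.sum_congr rfl fun i _ => hterm i
  rw [hfB, hA, Finset.sum_range_add]
  exact add_comm _ _
end

section
/- Let $H$ be an invertible $k \times k$ matrix over a finite field $\mathbb{F}_p$ and let $M, A$ be matrices with $A = \sum_{i=0}^{m-1} H^i M H^i$. Then there exist matrices $R, S$, each a polynomial in $H$ of degree at most $k-1$ (with $S$ invertible), such that $R M S = H A H + M - A$. -/
theorem stmt_13 {k p : ℕ} [Fact p.Prime]
    (H M A : Matrix (Fin k) (Fin k) (ZMod p)) (hH : IsUnit H)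
    (m : ℕ) (hm : 0 < m)
    (hA : A = ∑ i ∈ Finset.range m, H ^ i * M * H ^ i) :
    ∃ R S : Matrix (Fin k) (Fin k) (ZMod p),
      (∃ f : Polynomial (ZMod p), f.natDegree ≤ k - 1 ∧ Polynomial.aeval H f = R) ∧
      (∃ g : Polynomial (ZMod p), g.natDegree ≤ k - 1 ∧ Polynomial.aeval H g = S) ∧
      IsUnit S ∧ R * M * S = H * A * H + M - A := by
  have key : H * A * H + M - A = H ^ m * M * H ^ m := by
    subst hA
    have h1 : H * (∑ i ∈ Finset.range m, H ^ i * M * H ^ i) * H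
        = ∑ i ∈ Finset.range m, H ^ (i + 1) * M * H ^ (i + 1) := by
      rw [Finset.mul_sum, Finset.sum_mul]
      refine Finset.sum_congr rfl fun i _ => ?_
      rw [pow_succ, ← mul_assoc, ← mul_assoc, ← mul_assoc,
        ← pow_mul_comm']
    rw [h1]
    have h2 : (∑ i ∈ Finset.range m, H ^ (i + 1) * M * H ^ (i + 1))
        + H ^ 0 * M * H ^ 0
        = ∑ i ∈ Finset.range (m + 1), H ^ i * M * H ^ i := by
      rw [Finset.sum_range_succ']
    have h3 : ∑ i ∈ Finset.range (m + 1), H ^ i * M * H ^ i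
        = (∑ i ∈ Finset.range m, H ^ i * M * H ^ i) + H ^ m * M * H ^ m := by
      rw [Finset.sum_range_succ]
    simp only [pow_zero, one_mul, mul_one] at h2
    rw [← h2] at h3
    linear_combination (norm := abel) h3
  have hpoly : ∀ N : Matrix (Fin k) (Fin k) (ZMod p), (∃ n, N = H ^ n) →
      ∃ f : Polynomial (ZMod p), f.natDegree ≤ k - 1 ∧ Polynomial.aeval H f = N := by
    rintro N ⟨n, rfl⟩
    rcases Nat.eq_zero_or_pos k with hk | hk
    · refine ⟨0, by simp, ?_⟩
      have : Subsingleton (Matrix (Fin k) (Fin k) (ZMod p)) := by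
        subst hk; infer_instance
      exact Subsingleton.elim _ _
    · refine ⟨(Polynomial.X ^ n) %ₘ H.charpoly, ?_, ?_⟩
      · have hmon := H.charpoly_monic
        have hd : H.charpoly.natDegree = k := by
          simpa using H.charpoly_natDegree_eq_dim
        have := Polynomial.natDegree_modByMonic_lt (Polynomial.X ^ n) hmon
          (fun h => by rw [h] at hd; simp at hd; omega)
        omega
      · have := Polynomial.modByMonic_add_div (Polynomial.X ^ n : Polynomial (ZMod p))
          H.charpoly
        have h0 := Matrix.aeval_self_charpoly H
        calc Polynomial.aeval H ((Polynomial.X ^ n) %ₘ H.charpoly)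
            = Polynomial.aeval H ((Polynomial.X ^ n) %ₘ H.charpoly
              + H.charpoly * ((Polynomial.X ^ n) /ₘ H.charpoly)) := by
              rw [map_add, map_mul, h0, zero_mul, add_zero]
          _ = Polynomial.aeval H (Polynomial.X ^ n) := by rw [this]
          _ = H ^ n := by simp
  obtain ⟨f, hf1, hf2⟩ := hpoly (H ^ m) ⟨m, rfl⟩
  exact ⟨H ^ m, H ^ m, ⟨f, hf1, hf2⟩, ⟨f, hf1, hf2⟩, hH.pow m, key.symm⟩
end

section
/- Let $H, M, A, B$ be $k \times k$ matrices over a field, and suppose $R, S$ commute with $H$, $R M S = H A H + M - A$, and $B = \sum_{i=0}^{n-1} H^i M H^i$. Then $R B S = H^n A H^n + \sum_{i=0}^{n-1} H^i M H^i - A$. -/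
theorem stmt_14 {k : ℕ} {F : Type*} [Field F]
    (H M A B R S : Matrix (Fin k) (Fin k) F) (n : ℕ) (hn : 0 < n)
    (hR : R * H = H * R) (hS : S * H = H * S)
    (hRS : R * M * S = H * A * H + M - A)
    (hB : B = ∑ i ∈ Finset.range n, H ^ i * M * H ^ i) :
    R * B * S = H ^ n * A * H ^ n + (∑ i ∈ Finset.range n, H ^ i * M * H ^ i) - A := by
  have hRp : ∀ i : ℕ, R * H ^ i = H ^ i * R := fun i => ((Commute.pow_right hR i))
  have hSp : ∀ i : ℕ, H ^ i * S = S * H ^ i := fun i => (Commute.pow_right hS i).symm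
  have key : R * B * S = ∑ i ∈ Finset.range n, H ^ i * (R * M * S) * H ^ i := by
    rw [hB, Finset.mul_sum, Finset.sum_mul]
    refine Finset.sum_congr rfl fun i _ => ?_
    calc R * (H ^ i * M * H ^ i) * S
        = (R * H ^ i) * M * (H ^ i * S) := by noncomm_ring
      _ = (H ^ i * R) * M * (S * H ^ i) := by rw [hRp, hSp]
      _ = H ^ i * (R * M * S) * H ^ i := by noncomm_ring
  rw [key]
  have : ∀ i : ℕ, H ^ i * (R * M * S) * H ^ i
      = (H ^ (i+1) * A * H ^ (i+1) - H ^ i * A * H ^ i) + H ^ i * M * H ^ i := by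
    intro i
    have h1 : H ^ i * (H * A * H) * H ^ i = H ^ (i+1) * A * H ^ (i+1) := by
      calc H ^ i * (H * A * H) * H ^ i = (H ^ i * H) * A * (H * H ^ i) := by noncomm_ring
        _ = H ^ (i+1) * A * H ^ (i+1) := by rw [← pow_succ, ← pow_succ']
    rw [hRS, ← h1]
    noncomm_ring
  simp only [this, Finset.sum_add_distrib, Finset.sum_range_sub
    (fun i => H ^ i * A * H ^ i)]
  simp only [pow_zero, one_mul, mul_one]
  abel
end
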